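/- arXiv:1405.6899 — 2 statements merged into one kernel-verified Lean document; each statement's English description precedes it below -/
import Mathlib

section
/- Let A and B be finite sets of agents with B ⊆ 𝒜, and let k be the number of actions at state q. Then F is an (η↾A)-compatible B-profile at q if and only if there exist F₁ a partial profile for B \ A (i.e., F₁ : Fin k → ℕ with ∑ F₁ i = |B \ A|) and F₂ an (η↾A)-compatible (A ∩ B)-profile at q such that F = F₁ + F₂ (coordinatewise addition). -/
variable {𝒜 : Type*} [DecidableEq 𝒜] {k : ℕ}

/-- Restriction of the normative system (at a fixed state) to coalition `A`. -/
def restrict (η : 𝒜 → Finset (Fin k)) (A : Finset 𝒜) (a : 𝒜) : Finset (Fin k) :=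
  if a ∈ A then η a else ∅

/-- `F` is an `(η↾A)`-compatible `B`-profile: it is induced by some `B`-action
avoiding the restricted forbidden sets. -/
def CompatProfile (η : 𝒜 → Finset (Fin k)) (A B : Finset 𝒜) (F : Fin k → ℕ) : Prop :=
  ∃ ρ : 𝒜 → Fin k, (∀ b ∈ B, ρ b ∉ restrict η A b) ∧
    ∀ i : Fin k, F i = (B.filter (fun b => ρ b = i)).card

/-- Any partial profile for `S` is realized by some action agreeing with a
given base action outside `S`. -/
lemma exists_realizing (ρ₀ : 𝒜 → Fin k) (S : Finset 𝒜) :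
    ∀ (G : Fin k → ℕ), ∑ i, G i = S.card →
      ∃ ρ : 𝒜 → Fin k, (∀ a, a ∉ S → ρ a = ρ₀ a) ∧
        ∀ i, (S.filter (fun b => ρ b = i)).card = G i := by
  induction S using Finset.induction_on with
  | empty =>
    intro G hG
    refine ⟨ρ₀, fun a _ => rfl, fun i => ?_⟩
    simp only [Finset.filter_empty, Finset.card_empty]
    have := (show ∀ i, G i = 0 by simpa using hG) i
    omega
  | @insert a s ha ih =>
    intro G hG
    rw [Finset.card_insert_of_notMem ha] at hG
    have hpos : ∃ i₀, 0 < G i₀ := by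
      by_contra h
      push_neg at h
      have : ∑ i, G i = 0 := Finset.sum_eq_zero (fun i _ => by have := h i; omega)
      omega
    obtain ⟨i₀, hi₀⟩ := hpos
    set G' : Fin k → ℕ := Function.update G i₀ (G i₀ - 1) with hG'
    have hsum : ∑ i, G' i = s.card := by
      have : ∑ i, G' i = (G i₀ - 1) + ∑ i ∈ Finset.univ \ {i₀}, G i := by
        rw [hG', Finset.sum_update_of_mem (Finset.mem_univ i₀)]
      have h2 : ∑ i, G i = (∑ i ∈ Finset.univ \ {i₀}, G i) + G i₀ :=
        Finset.sum_eq_sum_sdiff_singleton_add (Finset.mem_univ i₀) G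
      omega
    obtain ⟨ρ, hρ₀, hρ⟩ := ih G' hsum
    refine ⟨Function.update ρ a i₀, fun x hx => ?_, fun i => ?_⟩
    · rw [Function.update_of_ne (by rintro rfl; exact hx (Finset.mem_insert_self _ s)),
        hρ₀ x (fun h => hx (Finset.mem_insert_of_mem h))]
    · have hfs : s.filter (fun b => Function.update ρ a i₀ b = i)
          = s.filter (fun b => ρ b = i) := by
        apply Finset.filter_congr
        intro b hb
        rw [Function.update_of_ne (by rintro rfl; exact ha hb)]
      rw [Finset.filter_insert]
      by_cases hii : i = i₀
      · subst hii
        rw [if_pos (Function.update_self a i ρ)]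
        rw [Finset.card_insert_of_notMem (fun h => ha (Finset.mem_of_mem_filter _ h)),
          hfs, hρ]
        simp [hG', Function.update_self]
        omega
      · rw [if_neg (by simp [Function.update_self, Ne.symm hii]), hfs, hρ]
        exact Function.update_of_ne hii _ _

lemma card_split (A B : Finset 𝒜) (p : 𝒜 → Prop) [DecidablePred p] :
    (B.filter p).card = ((B \ A).filter p).card + ((A ∩ B).filter p).card := by
  rw [← Finset.card_union_of_disjoint, ← Finset.filter_union]
  · congr 1
    rw [Finset.inter_comm, Finset.sdiff_union_inter]
  · exact (Finset.disjoint_filter_filter (Finset.sdiff_disjoint.mono_right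
      Finset.inter_subset_left))

/-- Proposition 1: `F` is an `(η↾A)`-compatible `B`-profile iff `F = F₁ + F₂`
for some partial profile `F₁` for `B \ A` and some `(η↾A)`-compatible
`(A ∩ B)`-profile `F₂`. -/
theorem compatProfile_iff_add (η : 𝒜 → Finset (Fin k)) (A B : Finset 𝒜)
    (F : Fin k → ℕ) :
    CompatProfile η A B F ↔
      ∃ F₁ F₂ : Fin k → ℕ, (∑ i, F₁ i = (B \ A).card) ∧
        CompatProfile η A (A ∩ B) F₂ ∧ F = F₁ + F₂ := by
  constructor
  · rintro ⟨ρ, hρ, hF⟩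
    refine ⟨fun i => ((B \ A).filter (fun b => ρ b = i)).card,
      fun i => ((A ∩ B).filter (fun b => ρ b = i)).card, ?_,
      ⟨ρ, fun b hb => hρ b (Finset.mem_of_mem_inter_right hb), fun i => rfl⟩, ?_⟩
    · exact (Finset.card_eq_sum_card_fiberwise (fun b _ => Finset.mem_univ (ρ b))).symm
    · funext i
      simpa [hF i] using card_split A B (fun b => ρ b = i)
  · rintro ⟨F₁, F₂, hF₁, ⟨ρ₂, hρ₂, hF₂⟩, rfl⟩
    obtain ⟨ρ, hρoff, hρfib⟩ := exists_realizing ρ₂ (B \ A) F₁ hF₁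
    refine ⟨ρ, fun b hb => ?_, fun i => ?_⟩
    · by_cases hbA : b ∈ A
      · rw [hρoff b (fun h => (Finset.mem_sdiff.mp h).2 hbA)]
        exact hρ₂ b (Finset.mem_inter_of_mem hbA hb)
      · simp [restrict, hbA]
    · rw [card_split A B (fun b => ρ b = i), hρfib i]
      have : (A ∩ B).filter (fun b => ρ b = i) = (A ∩ B).filter (fun b => ρ₂ b = i) := by
        apply Finset.filter_congr
        intro b hb
        rw [hρoff b (fun h => (Finset.mem_sdiff.mp h).2 (Finset.mem_of_mem_inter_left hb))]
      rw [this, ← hF₂ i]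
      rfl
end

section
/- If F₂ : Fin k → ℕ is an (η↾A)-compatible (A ∩ B)-profile at q and F₁ : Fin k → ℕ is any partial profile for B \ A at q (∑ F₁ i = |B \ A|), then F₁ + F₂ is an (η↾A)-compatible B-profile at q. -/
variable {𝒜 : Type*} [DecidableEq 𝒜] {k : ℕ}

/-- Fiber of `Sigma.fst` over `i` is equivalent to `Fin (F i)`. -/
def fiberEquiv (F : Fin k → ℕ) (i : Fin k) : {p : Σ j, Fin (F j) // p.1 = i} ≃ Fin (F i) where
  toFun p := p.2 ▸ p.1.2
  invFun x := ⟨⟨i, x⟩, rfl⟩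
  left_inv := by rintro ⟨⟨j, x⟩, rfl⟩; rfl
  right_inv x := rfl

omit [DecidableEq 𝒜] in
lemma exists_assignment (s : Finset 𝒜) (F : Fin k → ℕ) (h : s.card = ∑ i, F i) :
    ∃ g : {x // x ∈ s} → Fin k, ∀ i, (s.attach.filter fun x => g x = i).card = F i := by
  have hcard : Fintype.card {x // x ∈ s} = Fintype.card (Σ j, Fin (F j)) := by
    simp [Fintype.card_coe, h]
  obtain ⟨e⟩ := Fintype.card_eq.mp hcard
  refine ⟨fun x => (e x).1, fun i => ?_⟩
  have h1 : (s.attach.filter fun x => (e x).1 = i).card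
      = Fintype.card {x : {x // x ∈ s} // (e x).1 = i} := by
    rw [Fintype.card_subtype, Finset.univ_eq_attach]
  rw [h1, Fintype.card_congr ((e.subtypeEquiv (fun x => Iff.rfl)).trans (fiberEquiv F i))]
  simp

/-- The easy direction of Proposition 1: adding any partial profile for `B \ A` to an
`(η↾A)`-compatible `(A ∩ B)`-profile gives an `(η↾A)`-compatible `B`-profile. -/
theorem add_compatProfile (η : 𝒜 → Finset (Fin k)) (A B : Finset 𝒜)
    (F₁ F₂ : Fin k → ℕ) (hF₁ : ∑ i, F₁ i = (B \ A).card)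
    (hF₂ : CompatProfile η A (A ∩ B) F₂) :
    CompatProfile η A B (F₁ + F₂) := by
  obtain ⟨ρ₂, hρ₂mem, hρ₂cnt⟩ := hF₂
  obtain ⟨g, hg⟩ := exists_assignment (B \ A) F₁ hF₁.symm
  refine ⟨fun a => if h : a ∈ B \ A then g ⟨a, h⟩ else ρ₂ a, ?_, ?_⟩
  · intro b hb
    by_cases hbA : b ∈ A
    · have hbs : b ∉ B \ A := by simp [hbA]
      simp only [hbs, dif_neg, not_false_iff]
      exact hρ₂mem b (Finset.mem_inter.mpr ⟨hbA, hb⟩)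
    · intro hmem
      simp [restrict, hbA] at hmem
  · intro i
    have hdisj : Disjoint (B \ A) (A ∩ B) := by
      rw [Finset.disjoint_left]
      intro a ha ha'
      exact (Finset.mem_sdiff.mp ha).2 (Finset.mem_inter.mp ha').1
    have hunion : B = (B \ A) ∪ (A ∩ B) := by
      ext a
      simp only [Finset.mem_union, Finset.mem_sdiff, Finset.mem_inter]
      tauto
    rw [Pi.add_apply, hρ₂cnt i]
    have key : (B.filter fun b => (if h : b ∈ B \ A then g ⟨b, h⟩ else ρ₂ b) = i)
        = ((B \ A).filter fun b => (if h : b ∈ B \ A then g ⟨b, h⟩ else ρ₂ b) = i)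
          ∪ ((A ∩ B).filter fun b => (if h : b ∈ B \ A then g ⟨b, h⟩ else ρ₂ b) = i) := by
      rw [← Finset.filter_union, ← hunion]
    rw [key, Finset.card_union_of_disjoint
      (Finset.disjoint_filter_filter hdisj)]
    congr 1
    · -- F₁ i = card of filter on B \ A
      rw [← hg i]
      apply Finset.card_bij (fun x _ => x.1)
      · intro x hx
        simp only [Finset.mem_filter, Finset.mem_attach, true_and] at hx
        simp only [Finset.mem_filter]
        exact ⟨x.2, by simp [x.2, hx]⟩
      · intro x _ y _ hxy; exact Subtype.ext hxy
      · intro b hb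
        simp only [Finset.mem_filter] at hb
        refine ⟨⟨b, hb.1⟩, ?_, rfl⟩
        simp only [Finset.mem_filter, Finset.mem_attach, true_and]
        simpa [hb.1] using hb.2
    · -- counts on A ∩ B agree with ρ₂
      apply congrArg Finset.card
      apply Finset.filter_congr
      intro a ha
      have : a ∉ B \ A := fun h => (Finset.mem_sdiff.mp h).2 (Finset.mem_inter.mp ha).1
      simp [this]
end
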